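/- arXiv:2402.17201 — 2 statements merged into one kernel-verified Lean document; each statement's English description precedes it below -/
import Mathlib

section
/- Let D : ℝ → ℝ be strictly decreasing with clearing prices defined as in the four-threshold policy: for r ≤ σ₁, z*(r) = z̄; for σ₁ < r < σ₂, z*(r) = D(π⁺) - r; for σ₂ ≤ r ≤ σ₃, z*(r) = 0; for σ₃ < r < σ₄, z*(r) = D(π⁻) - r; for r ≥ σ₄, z*(r) = z̲, where σ₂ = D(π⁺), σ₃ = D(π⁻), σ₁ = σ₂ - z̄, σ₄ = σ₃ - z̲, z̄ ≥ 0 ≥ z̲, π⁺ ≥ π⁻. Then z* : ℝ → ℝ is monotone nonincreasing and satisfies z̲ ≤ z*(r) ≤ z̄ for all r. -/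
/-- Monotonicity and envelope-feasibility of the optimal aggregate net
consumption `z*` of the four-threshold policy (equation (16)): `z*` is
nonincreasing in aggregate renewables and stays within `[z̲, z̄]`. -/
theorem stmt_12 (D : ℝ → ℝ) (πp πm σ1 σ2 σ3 σ4 zbar zlow : ℝ)
    (zstar : ℝ → ℝ)
    (hD : StrictAnti D)
    (hσ2 : σ2 = D πp) (hσ3 : σ3 = D πm)
    (hσ1 : σ1 = σ2 - zbar) (hσ4 : σ4 = σ3 - zlow)
    (hzbar : 0 ≤ zbar) (hzlow : zlow ≤ 0) (hπ : πm ≤ πp)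
    (hz1 : ∀ r : ℝ, r ≤ σ1 → zstar r = zbar)
    (hz2 : ∀ r : ℝ, σ1 < r → r < σ2 → zstar r = D πp - r)
    (hz3 : ∀ r : ℝ, σ2 ≤ r → r ≤ σ3 → zstar r = 0)
    (hz4 : ∀ r : ℝ, σ3 < r → r < σ4 → zstar r = D πm - r)
    (hz5 : ∀ r : ℝ, σ4 ≤ r → zstar r = zlow) :
    Antitone zstar ∧ ∀ r : ℝ, zlow ≤ zstar r ∧ zstar r ≤ zbar := by
  have hσ23 : σ2 ≤ σ3 := by rw [hσ2, hσ3]; exact hD.antitone hπ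
  have hlb : zlow ≤ zbar := hzlow.trans hzbar
  have hfz : ∀ r, zstar r
      = max zlow (min zbar (min 0 (σ3 - r) + max 0 (σ2 - r))) := by
    intro r
    rcases le_or_gt r σ1 with h1 | h1
    · rw [hz1 r h1]
      have h2 : zbar ≤ σ2 - r := by rw [hσ1] at h1; linarith
      have h3 : (0:ℝ) ≤ σ3 - r := by linarith
      rw [min_eq_left h3, max_eq_right (hzbar.trans h2), zero_add,
        min_eq_left h2, max_eq_right hlb]
    · rcases lt_or_ge r σ2 with h2 | h2
      · rw [hz2 r h1 h2, ← hσ2]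
        have h3 : (0:ℝ) ≤ σ3 - r := by linarith
        have h4 : (0:ℝ) ≤ σ2 - r := by linarith
        have h5 : σ2 - r ≤ zbar := by rw [hσ1] at h1; linarith
        rw [min_eq_left h3, max_eq_right h4, zero_add, min_eq_right h5,
          max_eq_right (hzlow.trans h4)]
      · rcases le_or_gt r σ3 with h3 | h3
        · rw [hz3 r h2 h3]
          have h4 : (0:ℝ) ≤ σ3 - r := by linarith
          have h5 : σ2 - r ≤ 0 := by linarith
          rw [min_eq_left h4, max_eq_left h5, zero_add, min_eq_right hzbar,
            max_eq_right hzlow]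
        · rcases lt_or_ge r σ4 with h4 | h4
          · rw [hz4 r h3 h4, ← hσ3]
            have h5 : σ3 - r ≤ 0 := by linarith
            have h6 : σ2 - r ≤ 0 := by linarith
            have h7 : zlow ≤ σ3 - r := by rw [hσ4] at h4; linarith
            rw [min_eq_right h5, max_eq_left h6, add_zero,
              min_eq_right (h5.trans hzbar), max_eq_right h7]
          · rw [hz5 r h4]
            have h5 : σ3 - r ≤ zlow := by rw [hσ4] at h4; linarith
            have h6 : σ2 - r ≤ 0 := by linarith
            rw [min_eq_right (h5.trans hzlow), max_eq_left h6, add_zero,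
              min_eq_right ((h5.trans hzlow).trans hzbar), max_eq_left h5]
  constructor
  · intro a b hab
    rw [hfz a, hfz b]
    have : σ3 - b ≤ σ3 - a := by linarith
    have : σ2 - b ≤ σ2 - a := by linarith
    gcongr
  · intro r
    rw [hfz r]
    constructor
    · exact le_max_left _ _
    · exact max_le hlb (min_le_left _ _)
end

section
/- Let π⁻ ≤ π ≤ π⁺ with π⁻, π ≥ 0, and let U be concave differentiable with derivative L. Let d_π satisfy L(d_π) = π and d_μ = r + z̲ with z̲ ≤ 0 (benchmark export-envelope-binding consumption, r large). If d_π < d_μ, then U(d_π) - π·(d_π - r) - U(d_μ) + π⁻·z̲ ≥ (π⁻ - π)·z̲ ≥ 0. -/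
/-- Individual rationality, Case 14: with `0 ≤ π⁻ ≤ π ≤ π⁺`, concave
differentiable `U` (derivative `L`), `L d_π = π`, `d_μ = r + z̲` with `z̲ ≤ 0`,
and `d_π < d_μ`, the member's community surplus exceeds the benchmark
export-envelope-binding surplus by at least `(π⁻ - π) z̲ ≥ 0`. -/
theorem stmt_15 (U L : ℝ → ℝ) (πp πm π r zlow dπ dμ : ℝ)
    (hU : ConcaveOn ℝ Set.univ U)
    (hL : ∀ x : ℝ, HasDerivAt U (L x) x)
    (hπm0 : 0 ≤ πm) (hπ1 : πm ≤ π) (hπ2 : π ≤ πp)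
    (hdπ : L dπ = π)
    (hdμ : dμ = r + zlow) (hzlow : zlow ≤ 0)
    (hlt : dπ < dμ) :
    U dπ - π * (dπ - r) - U dμ + πm * zlow ≥ (πm - π) * zlow ∧
    (πm - π) * zlow ≥ 0 := by
  have hs := hU.slope_le_of_hasDerivAt (Set.mem_univ dπ) (Set.mem_univ dμ) hlt (hL dπ)
  rw [slope_def_field, hdπ, div_le_iff₀ (by linarith)] at hs
  constructor
  · nlinarith
  · nlinarith
end
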